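/- Let A → R be an integral extension of noetherian rings and M a finitely generated A-module. Then codim_R(R ⊗_A M) ≤ codim_A M. -/

import Mathlib

/-!
STATEMENT 11: If `A → R` is an injective integral extension of noetherian
(commutative) rings and `M` is a finitely generated `A`-module, then
`codim_R (R ⊗_A M) ≤ codim_A M`, where the codimension of a finitely generated
module is the height of its annihilator ideal (`⊤`/infinite for the zero module).
-/

open TensorProduct

/-- The height of an ideal: the infimum of the heights of the primes containing it
(`⊤` if no prime contains it, e.g. for the unit ideal). -/
noncomputable def idealHeight {R : Type*} [CommRing R] (I : Ideal R) : ℕ∞ :=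
  ⨅ (p : PrimeSpectrum R) (_ : I ≤ p.asIdeal), Order.height p

/-- The codimension of a module: the height of its annihilator ideal. -/
noncomputable def moduleCodim (R : Type*) [CommRing R] (M : Type*) [AddCommGroup M]
    [Module R M] : ℕ∞ :=
  idealHeight (Module.annihilator R M)

/-- Nakayama + flat base change: if `S` is local, `N` a nontrivial finite `S`-module and
`F` a field killing the maximal ideal of `S`, then `F ⊗[S] N ≠ 0`. -/
lemma nontrivial_tensor_of_isLocalRing
    (S : Type*) [CommRing S] [IsLocalRing S] (N : Type*) [AddCommGroup N] [Module S N]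
    [Module.Finite S N] [Nontrivial N]
    (F : Type*) [Field F] [Algebra S F]
    (hk : ∀ a ∈ IsLocalRing.maximalIdeal S, algebraMap S F a = 0) :
    Nontrivial (F ⊗[S] N) := by
  let k := IsLocalRing.ResidueField S
  letI : Algebra k F := (Ideal.Quotient.lift _ (algebraMap S F) hk).toAlgebra
  haveI : IsScalarTower S k F := IsScalarTower.of_algebraMap_eq' rfl
  haveI h1 : Nontrivial (k ⊗[S] N) := by
    rcases subsingleton_or_nontrivial (k ⊗[S] N) with hs | h
    · exact absurd (IsLocalRing.subsingleton_tensorProduct.mp hs) (not_subsingleton _)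
    · exact h
  haveI h2 : Nontrivial (F ⊗[k] (k ⊗[S] N)) := by infer_instance
  let e1 : F ⊗[k] (k ⊗[S] N) ≃ₗ[F] F ⊗[S] N :=
    TensorProduct.AlgebraTensorModule.cancelBaseChange S k F F N
  exact e1.symm.toEquiv.nontrivial

/-- If `F` is a field which is an `A`-algebra whose structure map kills the annihilator of a
finite module `M`, then `F ⊗[A] M ≠ 0`. -/
lemma nontrivial_tensor_of_ann_le_ker
    (A : Type*) [CommRing A] (M : Type*) [AddCommGroup M] [Module A M] [Module.Finite A M]
    (F : Type*) [Field F] [Algebra A F]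
    (h : Module.annihilator A M ≤ RingHom.ker (algebraMap A F)) :
    Nontrivial (F ⊗[A] M) := by
  set p : Ideal A := RingHom.ker (algebraMap A F) with hpdef
  haveI hp : p.IsPrime := RingHom.ker_isPrime _
  let Aₚ := Localization.AtPrime p
  have hu : ∀ s : p.primeCompl, IsUnit (algebraMap A F s) := by
    rintro ⟨s, hs⟩
    refine isUnit_iff_ne_zero.mpr fun e => hs ?_
    exact RingHom.mem_ker.mpr e
  letI : Algebra Aₚ F := (IsLocalization.lift (S := Aₚ) hu).toAlgebra
  haveI : IsScalarTower A Aₚ F :=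
    IsScalarTower.of_algebraMap_eq' (IsLocalization.lift_comp hu).symm
  -- the structure map `Aₚ → F` kills the maximal ideal
  have key : ∀ a ∈ IsLocalRing.maximalIdeal Aₚ, algebraMap Aₚ F a = 0 := by
    intro a ha
    rw [← Localization.AtPrime.map_eq_maximalIdeal] at ha
    have h1 : algebraMap Aₚ F a ∈ (p.map (algebraMap A Aₚ)).map (algebraMap Aₚ F) :=
      Ideal.mem_map_of_mem _ ha
    rw [Ideal.map_map, ← IsScalarTower.algebraMap_eq] at h1
    have h2 : p.map (algebraMap A F) ≤ ⊥ := by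
      rw [Ideal.map_le_iff_le_comap]
      intro x hx
      simpa [Ideal.mem_comap] using RingHom.mem_ker.mp hx
    exact (Ideal.mem_bot).mp (h2 h1)
  -- `Aₚ ⊗[A] M` is a nontrivial finite `Aₚ`-module
  have hmem : (⟨p, hp⟩ : PrimeSpectrum A) ∈ Module.support A M :=
    Module.mem_support_iff_of_finite.mpr h
  haveI hnt : Nontrivial (LocalizedModule p.primeCompl M) := hmem
  let e0 : Aₚ ⊗[A] M ≃ₗ[Aₚ] LocalizedModule p.primeCompl M :=
    (IsLocalizedModule.isBaseChange p.primeCompl Aₚ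
      (LocalizedModule.mkLinearMap p.primeCompl M)).equiv
  haveI : Nontrivial (Aₚ ⊗[A] M) := e0.toEquiv.nontrivial
  haveI : Nontrivial (F ⊗[Aₚ] (Aₚ ⊗[A] M)) :=
    nontrivial_tensor_of_isLocalRing Aₚ (Aₚ ⊗[A] M) F key
  let e2 : F ⊗[Aₚ] (Aₚ ⊗[A] M) ≃ₗ[F] F ⊗[A] M :=
    TensorProduct.AlgebraTensorModule.cancelBaseChange A Aₚ F F M
  exact e2.symm.toEquiv.nontrivial

/-- If some `r : R` annihilating `R ⊗[A] M` has nonzero image in a field `K` compatible with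
the algebra structures, while the annihilator of `M` dies in `K`, we get a contradiction. -/
lemma aux_false
    (A R : Type*) [CommRing A] [CommRing R] [Algebra A R]
    (M : Type*) [AddCommGroup M] [Module A M] [Module.Finite A M]
    (K : Type*) [Field K] [Algebra A K] [Algebra R K] [IsScalarTower A R K]
    (r : R) (hr : r ∈ Module.annihilator R (R ⊗[A] M))
    (hrK : algebraMap R K r ≠ 0)
    (hker : Module.annihilator A M ≤ RingHom.ker (algebraMap A K)) : False := by
  let g : R →ₗ[A] K := (IsScalarTower.toAlgHom A R K).toLinearMap
  have h0 : ∀ m : M, ((algebraMap R K r) ⊗ₜ[A] m : K ⊗[A] M) = 0 := by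
    intro m
    have hz : (r ⊗ₜ[A] m : R ⊗[A] M) = 0 := by
      have := Module.mem_annihilator.mp hr ((1 : R) ⊗ₜ[A] m)
      rwa [TensorProduct.smul_tmul', smul_eq_mul, mul_one] at this
    have := congrArg (LinearMap.rTensor M g) hz
    simp at this; exact this
  have h1 : ∀ m : M, ((1 : K) ⊗ₜ[A] m : K ⊗[A] M) = 0 := by
    intro m
    have := congrArg (fun x : K ⊗[A] M => (algebraMap R K r)⁻¹ • x) (h0 m)
    simpa [TensorProduct.smul_tmul', smul_eq_mul, inv_mul_cancel₀ hrK] using this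
  have hss : Subsingleton (K ⊗[A] M) := by
    refine subsingleton_of_forall_eq 0 fun x => ?_
    induction x using TensorProduct.induction_on with
    | zero => rfl
    | tmul c m =>
      have : c • ((1 : K) ⊗ₜ[A] m : K ⊗[A] M) = c ⊗ₜ[A] m := by
        rw [TensorProduct.smul_tmul', smul_eq_mul, mul_one]
      rw [← this, h1 m, smul_zero]
    | add x y hx hy => rw [hx, hy, add_zero]
  exact (not_subsingleton_iff_nontrivial.mpr
    (nontrivial_tensor_of_ann_le_ker A M K hker)) hss

/-- If `q` is a prime of `R` whose contraction contains the annihilator of `M`, then `q`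
contains the annihilator of `R ⊗[A] M`. -/
lemma annihilator_baseChange_le
    (A R : Type*) [CommRing A] [CommRing R] [Algebra A R]
    (M : Type*) [AddCommGroup M] [Module A M] [Module.Finite A M]
    (q : Ideal R) [hq : q.IsPrime]
    (hle : Module.annihilator A M ≤ q.comap (algebraMap A R)) :
    Module.annihilator R (R ⊗[A] M) ≤ q := by
  intro r hr
  by_contra hrq
  let K := FractionRing (R ⧸ q)
  have hrK : algebraMap R K r ≠ 0 := by
    rw [IsScalarTower.algebraMap_apply R (R ⧸ q) K]
    intro e
    have h1 : (algebraMap R (R ⧸ q) r : R ⧸ q) = 0 :=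
      IsFractionRing.injective (R ⧸ q) K (e.trans (map_zero _).symm)
    rw [Ideal.Quotient.algebraMap_eq] at h1
    exact hrq (Ideal.Quotient.eq_zero_iff_mem.mp h1)
  have hker : Module.annihilator A M ≤ RingHom.ker (algebraMap A K) := by
    intro a ha
    have hmem : algebraMap A R a ∈ q := hle ha
    have hz : (algebraMap R (R ⧸ q) (algebraMap A R a) : R ⧸ q) = 0 := by
      rw [Ideal.Quotient.algebraMap_eq]
      exact Ideal.Quotient.eq_zero_iff_mem.mpr hmem
    rw [RingHom.mem_ker, IsScalarTower.algebraMap_apply A R K,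
      IsScalarTower.algebraMap_apply R (R ⧸ q) K, hz, map_zero]
  exact aux_false A R M K r hr hrK hker

theorem codim_base_change_le
    (A R : Type*) [CommRing A] [CommRing R] [IsNoetherianRing A] [IsNoetherianRing R]
    [Algebra A R] (hinj : Function.Injective (algebraMap A R))
    [Algebra.IsIntegral A R]
    (M : Type*) [AddCommGroup M] [Module A M] [Module.Finite A M] :
    moduleCodim R (R ⊗[A] M) ≤ moduleCodim A M := by
  unfold moduleCodim idealHeight
  refine le_iInf₂ fun p hp => ?_
  have hbot : (⊥ : Ideal R).comap (algebraMap A R) ≤ p.asIdeal := by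
    intro x hx
    have hx' : algebraMap A R x = 0 := hx
    have hx0 : x = 0 := hinj (hx'.trans (map_zero _).symm)
    rw [hx0]; exact p.asIdeal.zero_mem
  obtain ⟨Q, -, hQprime, hQcomap⟩ :=
    Ideal.exists_ideal_over_prime_of_isIntegral p.asIdeal ⊥ hbot
  haveI := hQprime
  refine iInf₂_le_of_le ⟨Q, hQprime⟩ ?_ ?_
  · exact annihilator_baseChange_le A R M Q (hQcomap ▸ hp)
  · -- `comap` is strictly monotone on `Spec` for integral extensions
    have hsm : StrictMono (fun x : PrimeSpectrum R =>
        (⟨x.asIdeal.comap (algebraMap A R), inferInstance⟩ : PrimeSpectrum A)) := by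
      intro x y hxy
      have hlt : x.asIdeal < y.asIdeal := hxy
      obtain ⟨z, hzy, hzx⟩ := SetLike.exists_of_lt hlt
      exact Ideal.comap_lt_comap_of_integral_mem_sdiff hlt.le ⟨hzy, hzx⟩
        (Algebra.IsIntegral.isIntegral z)
    have hh := Order.height_le_height_apply_of_strictMono _ hsm ⟨Q, hQprime⟩
    have heq : (⟨Q.comap (algebraMap A R), inferInstance⟩ : PrimeSpectrum A) = p :=
      PrimeSpectrum.ext hQcomap
    rwa [heq] at hh
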